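/- Suppose nr = (q^m−1)/s for positive integers m and s with m ≥ 2, and suppose {l_i : i ∈ Z_{n,r}} = {1, m}. If N_1 ≥ 2 and N_m ≥ 1, then δ^{(1)}_{⌈N_1/2⌉+1} > δ^{(m)}_{⌈N_m/2⌉}. -/

import Mathlib

open scoped Classical

/-- The `q`-cyclotomic coset of `i` modulo `N`, with representatives taken in `{1, …, N}`. -/
noncomputable def cosetOf (q N i : ℕ) : Finset ℕ :=
  (Finset.Icc 1 N).filter (fun x => ∃ j : ℕ, x ≡ i * q ^ j [MOD N])

/-- `Z_{n,r} = {1 + i r : 0 ≤ i ≤ n-1}`. -/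
def Zset (n r : ℕ) : Finset ℕ := (Finset.range n).image (fun i => 1 + i * r)

/-- The collection of `q`-cyclotomic cosets contained in `Z_{n,r}`. -/
noncomputable def cosetsIn (q n r : ℕ) : Finset (Finset ℕ) :=
  (Zset n r).image (fun i => cosetOf q (n * r) i)

/-- `N_l`: the number of `q`-cyclotomic cosets of size `l` contained in `Z_{n,r}`. -/
noncomputable def Ncount (q n r l : ℕ) : ℕ :=
  ((cosetsIn q n r).filter (fun C => C.card = l)).card

/-- Coset leader: the smallest element of a coset. -/
noncomputable def leader (C : Finset ℕ) : ℕ := sInf (C : Set ℕ)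

/-- The sorted (increasing) list of coset leaders of the cosets of size `l` in `Z_{n,r}`. -/
noncomputable def leaderList (q n r l : ℕ) : List ℕ :=
  Finset.sort (((cosetsIn q n r).filter (fun C => C.card = l)).image leader) (· ≤ ·)

/-- `δ_i^{(l)}`: the `i`-th smallest coset leader (1-indexed). -/
noncomputable def delta (q n r l i : ℕ) : ℕ := (leaderList q n r l).getD (i - 1) 0

theorem aux_sorted_getD_lt (D : ℕ) :
    ∀ L : List ℕ, L.Pairwise (· ≤ ·) → ∀ k i : ℕ,
      k ≤ (L.filter (fun x => x < D)).length → i < k → L.getD i 0 < D := by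
  intro L
  induction L with
  | nil => intro _ k i hk hi; simp at hk; omega
  | cons a T ih =>
    intro hs k i hk hi
    have hsT : T.Pairwise (· ≤ ·) := hs.of_cons
    by_cases ha : a < D
    · cases i with
      | zero => simpa using ha
      | succ j =>
        simp only [List.getD_cons_succ]
        have hk' : ((a :: T).filter (fun x => decide (x < D))).length
            = (T.filter (fun x => decide (x < D))).length + 1 := by
          simp [List.filter_cons, ha]
        rw [hk'] at hk
        exact ih hsT (k - 1) j (by omega) (by omega)
    · have hall : ∀ x ∈ T, ¬ (x < D) := by
        intro x hx
        have := (List.pairwise_cons.1 hs).1 x hx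
        omega
      have hz : ((a :: T).filter (fun x => decide (x < D))).length = 0 := by
        rw [List.length_eq_zero_iff, List.filter_eq_nil_iff]
        intro x hx
        simp only [List.mem_cons] at hx
        rcases hx with rfl | hx
        · simpa using ha
        · simpa using hall x hx
      rw [hz] at hk
      omega

/-- Sorted nodup list: if `x` is in the list and exactly `k` elements are `< x`,
then the entry at index `k` is `x`. -/
theorem aux_sorted_getD_eq (x : ℕ) :
    ∀ L : List ℕ, L.Pairwise (· ≤ ·) → L.Nodup → x ∈ L →
      ∀ k : ℕ, (L.filter (fun y => y < x)).length = k → L.getD k 0 = x := by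
  intro L
  induction L with
  | nil => intro _ _ h; simp at h
  | cons a T ih =>
    intro hs hnd hmem k hk
    have hsT : T.Pairwise (· ≤ ·) := hs.of_cons
    by_cases hax : a = x
    · subst hax
      have hall : ∀ y ∈ T, ¬ (y < a) := by
        intro y hy
        have := (List.pairwise_cons.1 hs).1 y hy
        omega
      have hz : ((a :: T).filter (fun y => decide (y < a))).length = 0 := by
        rw [List.length_eq_zero_iff, List.filter_eq_nil_iff]
        intro y hy
        simp only [List.mem_cons] at hy
        rcases hy with rfl | hy
        · simp
        · simpa using hall y hy
      rw [hz] at hk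
      subst hk
      simp
    · have hxT : x ∈ T := by
        rcases List.mem_cons.1 hmem with h | h
        · exact absurd h.symm hax
        · exact h
      have halt : a < x := by
        have := (List.pairwise_cons.1 hs).1 x hxT
        omega
      have hk' : ((a :: T).filter (fun y => decide (y < x))).length
          = (T.filter (fun y => decide (y < x))).length + 1 := by
        simp [List.filter_cons, halt]
      rw [hk'] at hk
      have hkpos : 1 ≤ k := by omega
      have := ih hsT hnd.of_cons hxT (k - 1) (by omega)
      cases k with
      | zero => omega
      | succ j => simpa using this

theorem mem_cosetOf {q N i x : ℕ} :
    x ∈ cosetOf q N i ↔ (x ∈ Finset.Icc 1 N ∧ ∃ j : ℕ, (x : ZMod N) = (i : ZMod N) * (q : ZMod N) ^ j) := by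
  simp only [cosetOf, Finset.mem_filter]
  constructor
  · rintro ⟨h1, j, hj⟩
    refine ⟨h1, j, ?_⟩
    have := (ZMod.natCast_eq_natCast_iff _ _ _).2 hj
    push_cast at this
    exact this
  · rintro ⟨h1, j, hj⟩
    refine ⟨h1, j, ?_⟩
    rw [← ZMod.natCast_eq_natCast_iff]
    push_cast
    exact hj

theorem eq_of_modEq_Icc {N a b : ℕ} (ha : a ∈ Finset.Icc 1 N) (hb : b ∈ Finset.Icc 1 N)
    (h : (a : ZMod N) = (b : ZMod N)) : a = b := by
  simp only [Finset.mem_Icc] at ha hb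
  have h' : a ≡ b [MOD N] := (ZMod.natCast_eq_natCast_iff _ _ _).1 h
  have hd : (N : ℤ) ∣ (b : ℤ) - a := h'.dvd
  obtain ⟨t, ht⟩ := hd
  have hN0 : 0 < N := by omega
  have ht0 : t = 0 := by
    rcases lt_trichotomy t 0 with h0 | h0 | h0
    · nlinarith [ht]
    · exact h0
    · nlinarith [ht]
  rw [ht0] at ht
  omega

theorem mem_Zset {n r x : ℕ} (hr : 0 < r) :
    x ∈ Zset n r ↔ (x ∈ Finset.Icc 1 (n * r) ∧ x ≡ 1 [MOD r]) := by
  simp only [Zset, Finset.mem_image, Finset.mem_range, Finset.mem_Icc]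
  constructor
  · rintro ⟨i, hi, rfl⟩
    refine ⟨⟨by omega, by nlinarith⟩, ?_⟩
    have : r ∣ (1 + i * r) - 1 := by simp
    exact ((Nat.modEq_iff_dvd' (by omega)).2 this).symm
  · rintro ⟨⟨h1, h2⟩, h3⟩
    have hd : r ∣ x - 1 := (Nat.modEq_iff_dvd' h1).1 h3.symm
    obtain ⟨i, hi⟩ := hd
    rw [mul_comm r i] at hi
    refine ⟨i, ?_, by omega⟩
    by_contra hc
    push_neg at hc
    have : n * r ≤ i * r := Nat.mul_le_mul_right r hc
    omega

theorem dvd_iff_div_gcd_dvd {N d x : ℕ} (hd : 0 < d) (hN : 0 < N) :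
    N ∣ x * d ↔ N / Nat.gcd d N ∣ x := by
  set g := Nat.gcd d N with hg
  have hgpos : 0 < g := Nat.gcd_pos_of_pos_left _ hd
  have hgd : g ∣ d := Nat.gcd_dvd_left _ _
  have hgN : g ∣ N := Nat.gcd_dvd_right _ _
  obtain ⟨w, hw⟩ := hgd
  obtain ⟨A, hA⟩ := hgN
  have hco : Nat.Coprime w A := by
    have h2 := Nat.coprime_div_gcd_div_gcd (m := d) (n := N) hgpos
    have e1 : d / Nat.gcd d N = w := by rw [← hg, hw, Nat.mul_div_cancel_left _ hgpos]
    have e2 : N / Nat.gcd d N = A := by rw [← hg, hA, Nat.mul_div_cancel_left _ hgpos]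
    rwa [e1, e2] at h2
  have hNA : N / g = A := by rw [hA, Nat.mul_div_cancel_left _ hgpos]
  rw [hNA]
  constructor
  · intro h
    rw [hA, hw] at h
    have h' : A * g ∣ (x * w) * g := by
      rw [mul_comm g A] at h
      calc A * g ∣ x * (g * w) := h
        _ = (x * w) * g := by ring
    have hA2 : A ∣ x * w := (Nat.mul_dvd_mul_iff_right hgpos).1 h'
    exact (Nat.Coprime.dvd_of_dvd_mul_right (Nat.Coprime.symm hco) hA2)
  · intro h
    obtain ⟨y, hy⟩ := h
    rw [hA, hw, hy]
    exact ⟨y * w, by ring⟩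

section CosetLemmas

variable {q N m : ℕ}

theorem self_mem_cosetOf {i : ℕ} (hi : i ∈ Finset.Icc 1 N) : i ∈ cosetOf q N i := by
  rw [mem_cosetOf]
  exact ⟨hi, 0, by simp⟩

theorem cosetOf_nonempty {i : ℕ} (hi : i ∈ Finset.Icc 1 N) : (cosetOf q N i).Nonempty :=
  ⟨i, self_mem_cosetOf hi⟩

theorem cosetOf_eq_of_mem (hq1 : (q : ZMod N) ^ m = 1) (hm : 0 < m) {i x : ℕ}
    (hx : x ∈ cosetOf q N i) : cosetOf q N x = cosetOf q N i := by
  rw [mem_cosetOf] at hx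
  obtain ⟨hx1, a, ha⟩ := hx
  ext z
  rw [mem_cosetOf, mem_cosetOf]
  constructor
  · rintro ⟨hz1, b, hb⟩
    exact ⟨hz1, a + b, by rw [hb, ha]; ring⟩
  · rintro ⟨hz1, c, hc⟩
    refine ⟨hz1, m * a - a + c, ?_⟩
    have hxa : (x : ZMod N) * (q : ZMod N) ^ (m * a - a) = (i : ZMod N) * (q : ZMod N) ^ a
        * (q : ZMod N) ^ (m * a - a) := by rw [ha]
    have hpow : (q : ZMod N) ^ a * (q : ZMod N) ^ (m * a - a) = 1 := by
      rw [← pow_add]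
      have : a + (m * a - a) = m * a := by
        have : a ≤ m * a := Nat.le_mul_of_pos_left a hm
        omega
      rw [this, pow_mul, hq1, one_pow]
    calc (z : ZMod N) = (i : ZMod N) * (q : ZMod N) ^ c := hc
      _ = (i : ZMod N) * ((q : ZMod N) ^ a * (q : ZMod N) ^ (m * a - a)) * (q : ZMod N) ^ c := by
          rw [hpow]; ring
      _ = (x : ZMod N) * (q : ZMod N) ^ (m * a - a + c) := by rw [ha]; ring


theorem leader_mem {C : Finset ℕ} (h : C.Nonempty) : leader C ∈ C := by
  have : (C : Set ℕ).Nonempty := by exact_mod_cast h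
  have := Nat.sInf_mem this
  exact_mod_cast this

theorem leader_le {C : Finset ℕ} {y : ℕ} (h : y ∈ C) : leader C ≤ y :=
  Nat.sInf_le (by exact_mod_cast h)

theorem leader_singleton {x : ℕ} : leader ({x} : Finset ℕ) = x := by
  simp [leader]

def rep (N z : ℕ) : ℕ := (z - 1) % N + 1

theorem rep_mem {N z : ℕ} (hN : 0 < N) (hz : 1 ≤ z) : rep N z ∈ Finset.Icc 1 N := by
  have := Nat.mod_lt (z - 1) hN
  simp only [rep, Finset.mem_Icc]
  omega

theorem rep_cast {N z : ℕ} (hz : 1 ≤ z) : ((rep N z : ℕ) : ZMod N) = (z : ZMod N) := by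
  rw [ZMod.natCast_eq_natCast_iff]
  have h1 : (z - 1) % N ≡ z - 1 [MOD N] := Nat.mod_modEq _ _
  have h2 : (z - 1) % N + 1 ≡ (z - 1) + 1 [MOD N] := h1.add_right 1
  have : z - 1 + 1 = z := by omega
  rw [this] at h2
  exact h2

section Singleton

variable {q N : ℕ}

/-- If `A ∣ x` (where `A = N / gcd (q-1) N`) then the coset of `x` is `{x}`. -/
theorem cosetOf_eq_singleton (hN : 0 < N) (hq2 : 2 ≤ q) {x : ℕ} (hx : x ∈ Finset.Icc 1 N)
    (hA : N / Nat.gcd (q - 1) N ∣ x) : cosetOf q N x = {x} := by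
  have key : ∀ j : ℕ, (x : ZMod N) * (q : ZMod N) ^ j = (x : ZMod N) := by
    intro j
    have hdvd : N ∣ x * (q ^ j - 1) := by
      have he : Nat.gcd (q - 1) N ∣ q ^ j - 1 := by
        refine dvd_trans (Nat.gcd_dvd_left _ _) ?_
        have : q - 1 ∣ q ^ j - 1 ^ j := by
          simpa using Nat.sub_dvd_pow_sub_pow q 1 j
        simpa using this
      obtain ⟨a, ha⟩ := hA
      obtain ⟨b, hb⟩ := he
      have hA' : N / Nat.gcd (q - 1) N * Nat.gcd (q - 1) N = N :=
        Nat.div_mul_cancel (Nat.gcd_dvd_right _ _)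
      refine ⟨a * b, ?_⟩
      calc x * (q ^ j - 1) = (N / Nat.gcd (q - 1) N * Nat.gcd (q - 1) N) * (a * b) := by
            rw [ha, hb]; ring
        _ = N * (a * b) := by rw [hA']
    have hmod : x * q ^ j ≡ x [MOD N] := by
      have hq1 : 1 ≤ q ^ j := Nat.one_le_pow _ _ (by omega)
      have hle : x ≤ x * q ^ j := Nat.le_mul_of_pos_right x (by omega)
      have heq : x * q ^ j - x = x * (q ^ j - 1) := by rw [Nat.mul_sub]; omega
      exact ((Nat.modEq_iff_dvd' hle).2 (by rw [heq]; exact hdvd)).symm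
    have := (ZMod.natCast_eq_natCast_iff _ _ _).2 hmod
    push_cast at this
    exact this
  ext z
  rw [mem_cosetOf, Finset.mem_singleton]
  constructor
  · rintro ⟨hz1, j, hj⟩
    rw [key j] at hj
    exact eq_of_modEq_Icc hz1 hx hj
  · rintro rfl
    exact ⟨hx, 0, by simp⟩

/-- Conversely, if the coset of `x` is `{x}` then `A ∣ x`. -/
theorem dvd_of_cosetOf_eq_singleton (hN : 0 < N) (hq2 : 2 ≤ q) {x : ℕ}
    (hx : x ∈ Finset.Icc 1 N)
    (h : cosetOf q N x = {x}) : N / Nat.gcd (q - 1) N ∣ x := by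
  have hx1 : 1 ≤ x := (Finset.mem_Icc.1 hx).1
  have hxq : 1 ≤ x * q := Nat.mul_pos hx1 (by omega)
  have hy : rep N (x * q) ∈ cosetOf q N x := by
    rw [mem_cosetOf]
    refine ⟨rep_mem hN hxq, 1, ?_⟩
    rw [rep_cast hxq]
    push_cast
    ring
  rw [h, Finset.mem_singleton] at hy
  have hcast : ((x * q : ℕ) : ZMod N) = (x : ZMod N) := by rw [← rep_cast hxq, hy]
  have hmod : x * q ≡ x [MOD N] := (ZMod.natCast_eq_natCast_iff _ _ _).1 hcast
  have hdvd : N ∣ x * q - x :=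
    (Nat.modEq_iff_dvd' (Nat.le_mul_of_pos_right x (by omega))).1 hmod.symm
  have heq : x * q - x = x * (q - 1) := by rw [Nat.mul_sub]; omega
  rw [heq] at hdvd
  exact (dvd_iff_div_gcd_dvd (show 0 < q - 1 by omega) hN).1 hdvd

end Singleton

theorem length_filter_sort (s : Finset ℕ) (p : ℕ → Prop) [DecidablePred p] :
    ((Finset.sort s (· ≤ ·)).filter (fun x => p x)).length = (s.filter p).card := by
  classical
  have h1 : ((Finset.sort s (· ≤ ·)).filter (fun x => p x)).length
      = (Finset.sort s (· ≤ ·)).countP (fun x => p x) :=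
    List.countP_eq_length_filter.symm
  have h2 : (Finset.sort s (· ≤ ·)).countP (fun x => p x)
      = s.toList.countP (fun x => p x) :=
    (Finset.sort_perm_toList s _).countP_eq _
  rw [h1, h2]
  have h3 : s.toList.countP (fun x => p x) = Multiset.countP (fun x => p x) s.val := by
    conv_rhs => rw [← Multiset.coe_toList s.val]
    rw [Multiset.coe_countP]
    rfl
  rw [h3, Multiset.countP_eq_card_filter, ← Finset.filter_val]
  rfl

theorem AP_structure {N rA u Q : ℕ} (hrA : 0 < rA) (hQ : N = rA * Q) (hu1 : 1 ≤ u)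
    (hurA : u ≤ rA) (S : Finset ℕ)
    (hS : ∀ x, x ∈ S ↔ (1 ≤ x ∧ x ≤ N ∧ x ≡ u [MOD rA])) :
    S = (Finset.range Q).image (fun j => u + j * rA) := by
  ext x
  rw [hS, Finset.mem_image]
  constructor
  · rintro ⟨h1, h2, h3⟩
    have hux : u ≤ x := by
      have hm1 := Nat.mod_le x rA
      have h3' : x % rA = u % rA := h3
      rcases eq_or_lt_of_le hurA with heq | hlt
      · have : u % rA = 0 := by rw [heq]; exact Nat.mod_self rA
        have hdvd : rA ∣ x := Nat.dvd_of_mod_eq_zero (by omega)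
        have := Nat.le_of_dvd (by omega) hdvd
        omega
      · have : u % rA = u := Nat.mod_eq_of_lt hlt
        omega
    have hdvd : rA ∣ x - u := (Nat.modEq_iff_dvd' hux).1 h3.symm
    obtain ⟨j, hj⟩ := hdvd
    refine ⟨j, Finset.mem_range.2 ?_, ?_⟩
    · by_contra hc
      push_neg at hc
      have : rA * Q ≤ rA * j := Nat.mul_le_mul_left rA hc
      omega
    · rw [mul_comm j rA]; omega
  · rintro ⟨j, hj, rfl⟩
    have hj' := Finset.mem_range.1 hj
    refine ⟨by omega, ?_, ?_⟩
    · have hj1 : j * rA ≤ (Q - 1) * rA := Nat.mul_le_mul_right rA (by omega)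
      have e1 : (Q - 1) * rA = Q * rA - rA := by rw [Nat.sub_mul, one_mul]
      have e2 : Q * rA = rA * Q := mul_comm _ _
      have e3 : rA ≤ Q * rA := Nat.le_mul_of_pos_left rA (by omega)
      omega
    · have : (u + j * rA) % rA = u % rA := Nat.add_mul_mod_self_right u j rA
      exact this

theorem range_image_filter_lt {u rA Q c : ℕ} (hrA : 0 < rA) (hc : c ≤ Q) :
    ((Finset.range Q).image (fun j => u + j * rA)).filter (fun x => x < u + c * rA)
      = (Finset.range c).image (fun j => u + j * rA) := by
  ext x
  simp only [Finset.mem_filter, Finset.mem_image, Finset.mem_range]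
  constructor
  · rintro ⟨⟨j, hj, rfl⟩, hlt⟩
    refine ⟨j, ?_, rfl⟩
    by_contra hcc
    push_neg at hcc
    have : c * rA ≤ j * rA := Nat.mul_le_mul_right rA hcc
    omega
  · rintro ⟨j, hj, rfl⟩
    have : j * rA < c * rA := (Nat.mul_lt_mul_right hrA).2 hj
    exact ⟨⟨j, by omega, rfl⟩, by omega⟩

theorem card_image_ap {u rA Q : ℕ} (hrA : 0 < rA) :
    ((Finset.range Q).image (fun j => u + j * rA)).card = Q := by
  rw [Finset.card_image_of_injective _ ?_, Finset.card_range]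
  intro a b hab
  simp only at hab
  have : a * rA = b * rA := by omega
  exact Nat.eq_of_mul_eq_mul_right hrA this

theorem eq_of_cast_window {N a b : ℕ} (hN : 0 < N) (h : (a : ZMod N) = (b : ZMod N))
    (h1 : a < b + N) (h2 : b < a + N) : a = b := by
  have h' : a ≡ b [MOD N] := (ZMod.natCast_eq_natCast_iff _ _ _).1 h
  obtain ⟨t, ht⟩ := h'.dvd
  have ht0 : t = 0 := by
    rcases lt_trichotomy t 0 with h0 | h0 | h0
    · nlinarith [ht]
    · exact h0
    · nlinarith [ht]
  rw [ht0] at ht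
  omega

theorem reflect_coset {q N m u D : ℕ} (hN : 0 < N) (hq2 : 2 ≤ q)
    (hq1 : (q : ZMod N) ^ m = 1) (hm : 2 ≤ m)
    (hu_fix : ∀ j : ℕ, (u : ZMod N) * (q : ZMod N) ^ j = (u : ZMod N)) (hu1 : 1 ≤ u)
    (hvD : 2 * u ≤ D) (hND : N + 2 * u ≤ 2 * D) (hDle : D ≤ N)
    (hDsing : cosetOf q N D = {D})
    {x : ℕ} (hx : x ∈ Finset.Icc 1 N) (hcard : (cosetOf q N x).card = m)
    (hlead : ∀ y ∈ cosetOf q N x, D ≤ y) :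
    (∀ y ∈ cosetOf q N x, D < y) ∧
    (∀ z, z ∈ cosetOf q N (N + 2 * u - x) ↔ ∃ y ∈ cosetOf q N x, z = N + 2 * u - y) := by
  have hm0 : 0 < m := by omega
  have hv_fix : ∀ j : ℕ, ((2 * u : ℕ) : ZMod N) * (q : ZMod N) ^ j = ((2 * u : ℕ) : ZMod N) := by
    intro j
    have h := hu_fix j
    push_cast
    calc (2 : ZMod N) * (u : ZMod N) * (q : ZMod N) ^ j
        = 2 * ((u : ZMod N) * (q : ZMod N) ^ j) := by ring
      _ = 2 * (u : ZMod N) := by rw [h]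
  have helt : ∀ y ∈ cosetOf q N x, D < y := by
    intro y hy
    have hDy := hlead y hy
    rcases eq_or_lt_of_le hDy with heq | hlt
    · exfalso
      have hC : cosetOf q N y = cosetOf q N x := cosetOf_eq_of_mem hq1 hm0 hy
      rw [← heq, hDsing] at hC
      rw [← hC] at hcard
      simp at hcard
      omega
    · exact hlt
  have hxC : x ∈ cosetOf q N x := self_mem_cosetOf hx
  have hxD : D < x := helt x hxC
  have hxIcc := Finset.mem_Icc.1 hx
  have hcast_refl : ((N + 2 * u - x : ℕ) : ZMod N) = ((2 * u : ℕ) : ZMod N) - (x : ZMod N) := by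
    have hle : x ≤ N + 2 * u := by omega
    rw [Nat.cast_sub hle]
    push_cast
    simp [ZMod.natCast_self]
  refine ⟨helt, ?_⟩
  intro z
  constructor
  · intro hz
    rw [mem_cosetOf] at hz
    obtain ⟨hz1, j, hj⟩ := hz
    have hz1' := Finset.mem_Icc.1 hz1
    have hxq1 : 1 ≤ x * q ^ j := Nat.mul_pos (by omega) (pow_pos (by omega) j)
    set w := rep N (x * q ^ j) with hwdef
    have hwC : w ∈ cosetOf q N x := by
      rw [mem_cosetOf]
      refine ⟨rep_mem hN hxq1, j, ?_⟩
      rw [rep_cast hxq1]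
      push_cast
      ring
    have hwD : D < w := helt w hwC
    have hwIcc := Finset.mem_Icc.1 (rep_mem (z := x * q ^ j) hN hxq1)
    have hwcast : (w : ZMod N) = (x : ZMod N) * (q : ZMod N) ^ j := by
      rw [hwdef, rep_cast hxq1]; push_cast; ring
    have hsum : ((z + w : ℕ) : ZMod N) = ((N + 2 * u : ℕ) : ZMod N) := by
      push_cast
      push_cast at hwcast
      rw [hcast_refl] at hj
      push_cast at hj
      rw [hj, hwcast]
      simp [ZMod.natCast_self]
      linear_combination (2 : ZMod N) * hu_fix j
    have heq : z + w = N + 2 * u :=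
      eq_of_cast_window hN hsum (by omega) (by omega)
    exact ⟨w, hwC, by omega⟩
  · rintro ⟨y, hy, rfl⟩
    have hyD : D < y := helt y hy
    rw [mem_cosetOf] at hy ⊢
    obtain ⟨hy1, j, hj⟩ := hy
    have hy1' := Finset.mem_Icc.1 hy1
    refine ⟨Finset.mem_Icc.2 ⟨by omega, by omega⟩, j, ?_⟩
    have hley : y ≤ N + 2 * u := by omega
    rw [Nat.cast_sub hley, hcast_refl]
    push_cast
    simp only [ZMod.natCast_self]
    rw [hj]
    linear_combination (-2 : ZMod N) * hu_fix j


theorem stmt8 (q n r m s : ℕ) (hq : IsPrimePow q) (hn : 0 < n) (hco : Nat.Coprime n q)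
    (hr : 0 < r) (hrdvd : r ∣ q - 1) (hm : 2 ≤ m) (hs : 0 < s)
    (hnrs : n * r * s = q ^ m - 1)
    (hset : (Zset n r).image (fun i => (cosetOf q (n * r) i).card) = {1, m})
    (hN1 : 2 ≤ Ncount q n r 1) (hNm : 1 ≤ Ncount q n r m) :
    delta q n r m ((Ncount q n r m + 1) / 2) <
      delta q n r 1 ((Ncount q n r 1 + 1) / 2 + 1) := by
  classical
  have hq2 : 2 ≤ q := hq.two_le
  have hN : 0 < n * r := Nat.mul_pos hn hr
  have hm0 : 0 < m := by omega
  have hq1 : (q : ZMod (n * r)) ^ m = 1 := by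
    have hdvd : (n * r) ∣ q ^ m - 1 := ⟨s, hnrs.symm⟩
    have hqm1 : 1 ≤ q ^ m := Nat.one_le_pow _ _ (by omega)
    have hmod : q ^ m ≡ 1 [MOD n * r] := ((Nat.modEq_iff_dvd' hqm1).2 hdvd).symm
    have hcast := (ZMod.natCast_eq_natCast_iff _ _ _).2 hmod
    push_cast at hcast
    exact hcast
  have hgcdpos : 0 < Nat.gcd (q - 1) (n * r) := Nat.gcd_pos_of_pos_left _ (by omega)
  set A := (n * r) / Nat.gcd (q - 1) (n * r) with hAdef
  have hAdvd : A ∣ n * r := Nat.div_dvd_of_dvd (Nat.gcd_dvd_right _ _)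
  have hApos : 0 < A := Nat.div_pos (Nat.le_of_dvd hN (Nat.gcd_dvd_right _ _)) hgcdpos
  have hqr : q ≡ 1 [MOD r] := ((Nat.modEq_iff_dvd' (by omega)).2 hrdvd).symm
  -- cosets over Zset stay in Zset
  have hcosetZ : ∀ i ∈ Zset n r, ∀ x ∈ cosetOf q (n * r) i, x ∈ Zset n r := by
    intro i hi x hx
    rw [mem_Zset hr] at hi ⊢
    obtain ⟨hiIcc, hir⟩ := hi
    have hx' : x ∈ Finset.Icc 1 (n * r) ∧ ∃ j, x ≡ i * q ^ j [MOD n * r] := by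
      simpa [cosetOf, Finset.mem_filter] using hx
    obtain ⟨hxIcc, j, hj⟩ := hx'
    refine ⟨hxIcc, ?_⟩
    have h1 : x ≡ i * q ^ j [MOD r] := hj.of_dvd (dvd_mul_left r n)
    have h2 : i * q ^ j ≡ 1 * 1 ^ j [MOD r] := Nat.ModEq.mul hir (hqr.pow j)
    simpa using h1.trans h2
  have hmemC : ∀ C, C ∈ cosetsIn q n r ↔ ∃ i ∈ Zset n r, C = cosetOf q (n * r) i := by
    intro C
    simp [cosetsIn, Finset.mem_image, eq_comm]
  have hcoset_eq : ∀ C ∈ cosetsIn q n r, ∀ z ∈ C, cosetOf q (n * r) z = C := by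
    intro C hC z hz
    obtain ⟨i, hi, rfl⟩ := (hmemC C).1 hC
    exact cosetOf_eq_of_mem hq1 hm0 hz
  have hCne : ∀ C ∈ cosetsIn q n r, C.Nonempty := by
    intro C hC
    obtain ⟨i, hi, rfl⟩ := (hmemC C).1 hC
    exact cosetOf_nonempty ((mem_Zset hr).1 hi).1
  have hdisj : ∀ C ∈ cosetsIn q n r, ∀ C' ∈ cosetsIn q n r, ∀ z, z ∈ C → z ∈ C' → C = C' := by
    intro C hC C' hC' z h1 h2
    rw [← hcoset_eq C hC z h1, ← hcoset_eq C' hC' z h2]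
  have hLinj : ∀ C ∈ cosetsIn q n r, ∀ C' ∈ cosetsIn q n r, leader C = leader C' → C = C' := by
    intro C hC C' hC' h
    exact hdisj C hC C' hC' (leader C) (leader_mem (hCne C hC)) (h ▸ leader_mem (hCne C' hC'))
  -- the singleton-element set S
  set S := (Finset.Icc 1 (n * r)).filter (fun x => A ∣ x ∧ x ≡ 1 [MOD r]) with hSdef
  have himg1 : ((cosetsIn q n r).filter (fun C => C.card = 1)).image leader = S := by
    ext x
    rw [hSdef]
    simp only [Finset.mem_image, Finset.mem_filter]
    constructor
    · rintro ⟨C, ⟨hC, hc1⟩, rfl⟩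
      obtain ⟨i, hi, rfl⟩ := (hmemC C).1 hC
      have hiIcc := ((mem_Zset hr).1 hi).1
      have hself := self_mem_cosetOf (q := q) hiIcc
      obtain ⟨a, ha⟩ := Finset.card_eq_one.1 hc1
      have hai : a = i := by
        rw [ha, Finset.mem_singleton] at hself
        exact hself.symm
      rw [hai] at ha
      have hdvdA : A ∣ i := dvd_of_cosetOf_eq_singleton hN hq2 hiIcc ha
      rw [ha, leader_singleton]
      exact ⟨hiIcc, hdvdA, ((mem_Zset hr).1 hi).2⟩
    · rintro ⟨hIcc, hdvdA, hmod1⟩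
      have hsing : cosetOf q (n * r) x = {x} := cosetOf_eq_singleton hN hq2 hIcc hdvdA
      have hxZ : x ∈ Zset n r := (mem_Zset hr).2 ⟨hIcc, hmod1⟩
      refine ⟨cosetOf q (n * r) x, ⟨(hmemC _).2 ⟨x, hxZ, rfl⟩, by rw [hsing]; simp⟩, ?_⟩
      rw [hsing]
      exact leader_singleton
  have hK1 : S.card = Ncount q n r 1 := by
    rw [← himg1, Ncount]
    apply Finset.card_image_of_injOn
    intro C hC C' hC' h
    have hC1 := (Finset.mem_filter.1 (Finset.mem_coe.1 hC)).1
    have hC'1 := (Finset.mem_filter.1 (Finset.mem_coe.1 hC')).1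
    exact hLinj C hC1 C' hC'1 h
  have hK1ge2 : 2 ≤ S.card := by rw [hK1]; exact hN1
  have hSne : S.Nonempty := Finset.card_pos.1 (by omega)
  set u := S.min' hSne with hudef
  have huS : u ∈ S := Finset.min'_mem _ _
  have huS' := Finset.mem_filter.1 huS
  have huIcc := Finset.mem_Icc.1 huS'.1
  have huA : A ∣ u := huS'.2.1
  have hur : u ≡ 1 [MOD r] := huS'.2.2
  have hu1 : 1 ≤ u := huIcc.1
  have hco_Ar : Nat.Coprime A r := by
    have h1 : Nat.gcd A r ∣ u := dvd_trans (Nat.gcd_dvd_left _ _) huA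
    have h2 : Nat.gcd A r ∣ u - 1 := dvd_trans (Nat.gcd_dvd_right _ _)
      ((Nat.modEq_iff_dvd' hu1).1 hur.symm)
    have h3 : Nat.gcd A r ∣ 1 := by
      have he : u - (u - 1) = 1 := by omega
      exact he ▸ Nat.dvd_sub h1 h2
    exact Nat.dvd_one.1 h3
  have hrA_dvd : r * A ∣ n * r :=
    Nat.Coprime.mul_dvd_of_dvd_of_dvd hco_Ar.symm (dvd_mul_left r n) hAdvd
  have hrApos : 0 < r * A := Nat.mul_pos hr hApos
  set Q := (n * r) / (r * A) with hQdef
  have hQeq : n * r = (r * A) * Q := (Nat.mul_div_cancel' hrA_dvd).symm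
  have hurA : u ≤ r * A := by
    by_contra hc
    push_neg at hc
    have hmem : u - r * A ∈ S := by
      rw [hSdef, Finset.mem_filter, Finset.mem_Icc]
      refine ⟨⟨by omega, by omega⟩, Nat.dvd_sub huA (dvd_mul_left A r), ?_⟩
      have he : u - (u - r * A) = r * A := by omega
      have h1 : u - r * A ≡ u [MOD r] :=
        (Nat.modEq_iff_dvd' (by omega)).2 (by rw [he]; exact dvd_mul_right r A)
      exact h1.trans hur
    have := S.min'_le _ hmem
    omega
  have hSiff : ∀ x, x ∈ S ↔ (1 ≤ x ∧ x ≤ n * r ∧ x ≡ u [MOD r * A]) := by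
    intro x
    rw [hSdef, Finset.mem_filter, Finset.mem_Icc]
    constructor
    · rintro ⟨⟨h1, h2⟩, hA', hr'⟩
      refine ⟨h1, h2, ?_⟩
      have hux : u ≤ x := S.min'_le x (by
        rw [hSdef, Finset.mem_filter, Finset.mem_Icc]
        exact ⟨⟨h1, h2⟩, hA', hr'⟩)
      have hd1 : A ∣ x - u := Nat.dvd_sub hA' huA
      have hd2 : r ∣ x - u := (Nat.modEq_iff_dvd' hux).1 (hur.trans hr'.symm)
      have hd3 : r * A ∣ x - u := Nat.Coprime.mul_dvd_of_dvd_of_dvd hco_Ar.symm hd2 hd1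
      exact ((Nat.modEq_iff_dvd' hux).2 hd3).symm
    · rintro ⟨h1, h2, h3⟩
      refine ⟨⟨h1, h2⟩, ?_, ?_⟩
      · have hxu_A : x ≡ u [MOD A] := h3.of_dvd (dvd_mul_left A r)
        have h0 : x ≡ 0 [MOD A] := hxu_A.trans (Nat.modEq_zero_iff_dvd.2 huA)
        exact Nat.modEq_zero_iff_dvd.1 h0
      · exact (h3.of_dvd (dvd_mul_right r A)).trans hur
  have hSAP : S = (Finset.range Q).image (fun j => u + j * (r * A)) :=
    AP_structure hrApos hQeq hu1 hurA S hSiff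
  have hQcard : S.card = Q := by rw [hSAP]; exact card_image_ap hrApos
  have hQK1 : Q = Ncount q n r 1 := by rw [← hQcard, hK1]
  set c := (Ncount q n r 1 + 1) / 2 with hcdef
  have hc1 : 1 ≤ c := by omega
  have hcQ : c < Q := by omega
  set D := u + c * (r * A) with hDdef
  have hDS : D ∈ S := by
    rw [hSAP]
    exact Finset.mem_image.2 ⟨c, Finset.mem_range.2 hcQ, rfl⟩
  have hDS' := Finset.mem_filter.1 hDS
  have hDIcc := Finset.mem_Icc.1 hDS'.1
  have hDA : A ∣ D := hDS'.2.1
  have hDsing : cosetOf q (n * r) D = {D} := cosetOf_eq_singleton hN hq2 hDS'.1 hDA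
  have hfiltcard : (S.filter (fun x => x < D)).card = c := by
    rw [hSAP, hDdef, range_image_filter_lt hrApos (le_of_lt hcQ)]
    exact card_image_ap hrApos
  have hdelta1 : delta q n r 1 ((Ncount q n r 1 + 1) / 2 + 1) = D := by
    have hLL : leaderList q n r 1 = Finset.sort S (· ≤ ·) := by rw [leaderList, himg1]
    rw [delta, hLL]
    have hidx : ((Ncount q n r 1 + 1) / 2 + 1) - 1 = c := by omega
    rw [hidx]
    apply aux_sorted_getD_eq D _ (Finset.pairwise_sort _ _) (Finset.sort_nodup _ _)
      ((Finset.mem_sort _).2 hDS)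
    rw [length_filter_sort]
    exact hfiltcard
  -- u is fixed by multiplication by q
  have hu_fix1 : (u : ZMod (n * r)) * (q : ZMod (n * r)) = (u : ZMod (n * r)) := by
    have hdvd : (n * r) ∣ u * (q - 1) := (dvd_iff_div_gcd_dvd (by omega) hN).2 huA
    have hle : u ≤ u * q := Nat.le_mul_of_pos_right u (by omega)
    have heq : u * q - u = u * (q - 1) := by rw [Nat.mul_sub]; omega
    have hmod : u * q ≡ u [MOD n * r] :=
      ((Nat.modEq_iff_dvd' hle).2 (by rw [heq]; exact hdvd)).symm
    have hcast := (ZMod.natCast_eq_natCast_iff _ _ _).2 hmod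
    push_cast at hcast
    exact hcast
  have hu_fix : ∀ j : ℕ, (u : ZMod (n * r)) * (q : ZMod (n * r)) ^ j = (u : ZMod (n * r)) := by
    intro j
    induction j with
    | zero => simp
    | succ k ih => rw [pow_succ, ← mul_assoc, ih, hu_fix1]
  have hrAcrA : r * A ≤ c * (r * A) := Nat.le_mul_of_pos_left _ hc1
  have hvD : 2 * u ≤ D := by omega
  have hND2 : n * r + 2 * u ≤ 2 * D := by
    have hK2c : Ncount q n r 1 ≤ 2 * c := by omega
    have h1 : (r * A) * Q ≤ (r * A) * (2 * c) := Nat.mul_le_mul_left _ (by omega)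
    have h2 : (r * A) * (2 * c) = 2 * (c * (r * A)) := by ring
    omega
  -- the size-m leader set
  set Sm := ((cosetsIn q n r).filter (fun C => C.card = m)).image leader with hSmdef
  have hSmcard : Sm.card = Ncount q n r m := by
    rw [hSmdef, Ncount]
    apply Finset.card_image_of_injOn
    intro C hC C' hC' h
    have hC1 := (Finset.mem_filter.1 (Finset.mem_coe.1 hC)).1
    have hC'1 := (Finset.mem_filter.1 (Finset.mem_coe.1 hC')).1
    exact hLinj C hC1 C' hC'1 h
  -- analysis of a coset whose leader is ≥ D
  have hanalysis : ∀ x ∈ Sm.filter (fun x => D ≤ x),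
      (cosetOf q (n * r) x ∈ cosetsIn q n r) ∧ (cosetOf q (n * r) x).card = m ∧
      leader (cosetOf q (n * r) x) = x ∧
      (n * r + 2 * u - x) ∈ Zset n r ∧
      cosetOf q (n * r) (n * r + 2 * u - x)
        = (cosetOf q (n * r) x).image (fun y => n * r + 2 * u - y) ∧
      (cosetOf q (n * r) (n * r + 2 * u - x)).card = m ∧
      (∀ z ∈ cosetOf q (n * r) (n * r + 2 * u - x), z < D) := by
    intro x hx
    rw [Finset.mem_filter] at hx
    obtain ⟨hxSm, hxD⟩ := hx
    rw [hSmdef, Finset.mem_image] at hxSm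
    obtain ⟨C, hCf, hleadx⟩ := hxSm
    rw [Finset.mem_filter] at hCf
    obtain ⟨hC, hCm⟩ := hCf
    have hxC : x ∈ C := hleadx ▸ leader_mem (hCne C hC)
    have hCx : cosetOf q (n * r) x = C := hcoset_eq C hC x hxC
    have hxCx : x ∈ cosetOf q (n * r) x := by rw [hCx]; exact hxC
    have hxIcc : x ∈ Finset.Icc 1 (n * r) := (mem_cosetOf.1 hxCx).1
    have hxIcc' := Finset.mem_Icc.1 hxIcc
    have hleadge : ∀ y ∈ cosetOf q (n * r) x, D ≤ y := by
      intro y hy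
      rw [hCx] at hy
      have := leader_le hy
      omega
    obtain ⟨hstrict, hchar⟩ := reflect_coset hN hq2 hq1 hm hu_fix hu1 hvD hND2 hDIcc.2
      hDsing hxIcc (by rw [hCx]; exact hCm) hleadge
    have hxgtD : D < x := hstrict x hxCx
    -- x ≡ 1 mod r
    obtain ⟨i, hi, hCeq⟩ := (hmemC C).1 hC
    have hxZ : x ∈ Zset n r := hcosetZ i hi x (by rw [← hCeq]; exact hxC)
    have hxr : x ≡ 1 [MOD r] := ((mem_Zset hr).1 hxZ).2
    have hwZ : (n * r + 2 * u - x) ∈ Zset n r := by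
      rw [mem_Zset hr]
      refine ⟨Finset.mem_Icc.2 ⟨by omega, by omega⟩, ?_⟩
      have hwx : (n * r + 2 * u - x) + x = n * r + 2 * u := by omega
      have hstep1 : (n * r + 2 * u - x) + 1 ≡ (n * r + 2 * u - x) + x [MOD r] :=
        (Nat.ModEq.refl _).add hxr.symm
      have hstep2 : n * r + 2 * u ≡ 0 + 2 * 1 [MOD r] :=
        Nat.ModEq.add (Nat.modEq_zero_iff_dvd.2 (dvd_mul_left r n)) (hur.mul_left 2)
      have hstep3 : (n * r + 2 * u - x) + 1 ≡ 1 + 1 [MOD r] := by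
        rw [hwx] at hstep1
        simpa using hstep1.trans hstep2
      exact Nat.ModEq.add_right_cancel' 1 hstep3
    have himgC : cosetOf q (n * r) (n * r + 2 * u - x)
        = (cosetOf q (n * r) x).image (fun y => n * r + 2 * u - y) := by
      ext z
      rw [hchar z, Finset.mem_image]
      constructor
      · rintro ⟨y, hy, rfl⟩; exact ⟨y, hy, rfl⟩
      · rintro ⟨y, hy, rfl⟩; exact ⟨y, hy, rfl⟩
    have hcard' : (cosetOf q (n * r) (n * r + 2 * u - x)).card = m := by
      rw [himgC]
      rw [Finset.card_image_of_injOn, hCx, hCm]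
      intro y1 hy1 y2 hy2 he
      have h1 := Finset.mem_Icc.1 (mem_cosetOf.1 (Finset.mem_coe.1 hy1)).1
      have h2 := Finset.mem_Icc.1 (mem_cosetOf.1 (Finset.mem_coe.1 hy2)).1
      simp only at he
      omega
    have hlt : ∀ z ∈ cosetOf q (n * r) (n * r + 2 * u - x), z < D := by
      intro z hz
      obtain ⟨y, hy, rfl⟩ := (hchar z).1 hz
      have := hstrict y hy
      omega
    exact ⟨by rw [hCx]; exact hC, by rw [hCx]; exact hCm, by rw [hCx]; exact hleadx,
      hwZ, himgC, hcard', hlt⟩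
  -- the injection
  have hinj : (Sm.filter (fun x => D ≤ x)).card ≤ (Sm.filter (fun x => x < D)).card := by
    apply Finset.card_le_card_of_injOn
      (fun x => leader (cosetOf q (n * r) (n * r + 2 * u - x)))
    · intro x hx
      obtain ⟨hC, hCm, hleadx, hwZ, himgC, hcard', hlt⟩ := hanalysis x hx
      have hC'mem : cosetOf q (n * r) (n * r + 2 * u - x) ∈ cosetsIn q n r :=
        (hmemC _).2 ⟨_, hwZ, rfl⟩
      have hC'ne : (cosetOf q (n * r) (n * r + 2 * u - x)).Nonempty := hCne _ hC'mem
      rw [Finset.mem_coe, Finset.mem_filter]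
      constructor
      · rw [hSmdef, Finset.mem_image]
        exact ⟨_, Finset.mem_filter.2 ⟨hC'mem, hcard'⟩, rfl⟩
      · exact hlt _ (leader_mem hC'ne)
    · intro x1 hx1 x2 hx2 heq
      obtain ⟨hC1, hCm1, hlead1, hwZ1, himg1', hcard1', hlt1⟩ :=
        hanalysis x1 (Finset.mem_coe.1 hx1)
      obtain ⟨hC2, hCm2, hlead2, hwZ2, himg2', hcard2', hlt2⟩ :=
        hanalysis x2 (Finset.mem_coe.1 hx2)
      have hC'1mem : cosetOf q (n * r) (n * r + 2 * u - x1) ∈ cosetsIn q n r :=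
        (hmemC _).2 ⟨_, hwZ1, rfl⟩
      have hC'2mem : cosetOf q (n * r) (n * r + 2 * u - x2) ∈ cosetsIn q n r :=
        (hmemC _).2 ⟨_, hwZ2, rfl⟩
      have hC'eq : cosetOf q (n * r) (n * r + 2 * u - x1)
          = cosetOf q (n * r) (n * r + 2 * u - x2) :=
        hLinj _ hC'1mem _ hC'2mem heq
      -- recover the original cosets
      have hrecover : ∀ x : ℕ, x ∈ Finset.Icc 1 (n * r) →
          ∀ (h : cosetOf q (n * r) (n * r + 2 * u - x)
            = (cosetOf q (n * r) x).image (fun y => n * r + 2 * u - y)),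
          (cosetOf q (n * r) (n * r + 2 * u - x)).image (fun y => n * r + 2 * u - y)
            = cosetOf q (n * r) x := by
        intro x hxIcc h
        rw [h, Finset.image_image]
        rw [Finset.image_congr (g := id), Finset.image_id]
        intro y hy
        have hy' := Finset.mem_Icc.1 (mem_cosetOf.1 hy).1
        simp only [Function.comp_apply, id_eq]
        omega
      have hx1Icc : x1 ∈ Finset.Icc 1 (n * r) := by
        have h := leader_mem (hCne _ hC1)
        rw [hlead1] at h
        exact (mem_cosetOf.1 h).1
      have hx2Icc : x2 ∈ Finset.Icc 1 (n * r) := by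
        have h := leader_mem (hCne _ hC2)
        rw [hlead2] at h
        exact (mem_cosetOf.1 h).1
      have hfinal : cosetOf q (n * r) x1 = cosetOf q (n * r) x2 := by
        rw [← hrecover x1 hx1Icc himg1', ← hrecover x2 hx2Icc himg2', hC'eq]
      rw [← hlead1, ← hlead2, hfinal]
  have hsplit : (Sm.filter (fun x => D ≤ x)).card + (Sm.filter (fun x => x < D)).card
      = Sm.card := by
    have h := Finset.card_filter_add_card_filter_not
      (s := Sm) (p := fun x => D ≤ x)
    simpa [not_le] using h
  have hlo : (Ncount q n r m + 1) / 2 ≤ (Sm.filter (fun x => x < D)).card := by omega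
  have hfin : delta q n r m ((Ncount q n r m + 1) / 2) < D := by
    rw [delta, leaderList]
    apply aux_sorted_getD_lt D _ (Finset.pairwise_sort _ _) ((Ncount q n r m + 1) / 2)
    · rw [length_filter_sort]
      exact hlo
    · omega
  rw [hdelta1]
  exact hfin
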